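/- A monad T on a dagger category C is a Frobenius monad if and only if the Kleisli category C_T admits a dagger such that (i) the canonical functors C → C_T and C_T → C are dagger functors, and (ii) for every object A, the morphism μ_A† : T(A) → T²(A) of C, regarded as a morphism T(A) → T(A) of C_T, is self-adjoint with respect to that dagger. -/

import Mathlib

open CategoryTheory Category MonoidalCategory

universe v u

/-- A dagger structure on a category: a contravariant, identity-on-objects,
involutive operation on morphisms. -/
class DaggerStruct (C : Type u) [Category.{v} C] where
  dag : ∀ {X Y : C}, (X ⟶ Y) → (Y ⟶ X)
  dag_dag : ∀ {X Y : C} (f : X ⟶ Y), dag (dag f) = f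
  dag_id : ∀ X : C, dag (𝟙 X) = 𝟙 X
  dag_comp : ∀ {X Y Z : C} (f : X ⟶ Y) (g : Y ⟶ Z), dag (f ≫ g) = dag g ≫ dag f

notation:max f "†" => DaggerStruct.dag f

/-- A monoidal dagger category: the dagger cooperates with the monoidal structure. -/
class MonoidalDagger (C : Type u) [Category.{v} C] [MonoidalCategory C] extends
    DaggerStruct C where
  dag_tensor : ∀ {X₁ Y₁ X₂ Y₂ : C} (f : X₁ ⟶ Y₁) (g : X₂ ⟶ Y₂), (f ⊗ₘ g)† = f† ⊗ₘ g†
  assoc_unitary : ∀ X Y Z : C, ((α_ X Y Z).hom)† = (α_ X Y Z).inv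
  lunitor_unitary : ∀ X : C, ((λ_ X).hom)† = (λ_ X).inv
  runitor_unitary : ∀ X : C, ((ρ_ X).hom)† = (ρ_ X).inv

/-- A symmetric monoidal dagger category: additionally the symmetries are unitary. -/
class SymmetricDagger (C : Type u) [Category.{v} C] [MonoidalCategory C]
    [SymmetricCategory C] extends MonoidalDagger C where
  braiding_unitary : ∀ X Y : C, ((β_ X Y).hom)† = (β_ X Y).inv

/-- A monoid object, given by explicit data. -/
structure IsMonoidObj {C : Type u} [Category.{v} C] [MonoidalCategory C] (A : C)
    (m : A ⊗ A ⟶ A) (u : 𝟙_ C ⟶ A) : Prop where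
  mul_assoc : (m ⊗ₘ 𝟙 A) ≫ m = (α_ A A A).hom ≫ (𝟙 A ⊗ₘ m) ≫ m
  one_mul : (u ⊗ₘ 𝟙 A) ≫ m = (λ_ A).hom
  mul_one : (𝟙 A ⊗ₘ u) ≫ m = (ρ_ A).hom

/-- A Frobenius monoid in a monoidal dagger category. -/
structure IsFrobeniusMonoid {C : Type u} [Category.{v} C] [MonoidalCategory C]
    [MonoidalDagger C] (A : C) (m : A ⊗ A ⟶ A) (u : 𝟙_ C ⟶ A) : Prop extends
    IsMonoidObj A m u where
  frobenius : (m† ⊗ₘ 𝟙 A) ≫ (α_ A A A).hom ≫ (𝟙 A ⊗ₘ m) =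
    (𝟙 A ⊗ₘ m†) ≫ (α_ A A A).inv ≫ (m ⊗ₘ 𝟙 A)

/-- A Frobenius monad on a dagger category. -/
structure IsFrobeniusMonad {C : Type u} [Category.{v} C] [DaggerStruct C]
    (T : Monad C) : Prop where
  map_dag : ∀ {X Y : C} (f : X ⟶ Y), T.map (f†) = (T.map f)†
  frobenius : ∀ A : C,
    ((T.μ.app (T.obj A))†) ≫ T.map (T.μ.app A) =
      T.map ((T.μ.app A)†) ≫ T.μ.app (T.obj A)

/-- An object of `C` regarded as an object of the Kleisli category. -/
def kObj {C : Type u} [Category.{v} C] (T : Monad C) (X : C) : Kleisli T := Kleisli.mk T X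

/-- A morphism `X ⟶ T (Y)` of `C` regarded as a morphism of the Kleisli category. -/
def kHom {C : Type u} [Category.{v} C] (T : Monad C) {X Y : C} (f : X ⟶ T.obj Y) :
    kObj T X ⟶ kObj T Y := Kleisli.Hom.mk f


section Aux

variable {C : Type u} [Category.{v} C] [DaggerStruct C] (T : Monad C)

/-- The candidate Kleisli dagger of a Frobenius monad. -/
def kd {X Y : C} (g : X ⟶ T.obj Y) : Y ⟶ T.obj X :=
  T.η.app Y ≫ ((T.μ.app Y)†) ≫ T.map (g†)

variable {T}

theorem mapdag' (hF : IsFrobeniusMonad T) {X Y : C} (f : X ⟶ Y) :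
    ((T.map f)†) = T.map (f†) := (hF.map_dag f).symm

theorem lem1 (hF : IsFrobeniusMonad T) (X : C) :
    ((T.μ.app X)†) ≫ T.map ((T.η.app X)†) = 𝟙 (T.obj X) := by
  have h := congrArg DaggerStruct.dag (T.right_unit X)
  rw [DaggerStruct.dag_comp, DaggerStruct.dag_id] at h
  rw [hF.map_dag]
  exact h

theorem recover {X Y : C} (h : X ⟶ T.obj Y) :
    T.η.app X ≫ T.map h ≫ T.μ.app Y = h := by
  rw [← T.η.naturality_assoc h]
  simp

theorem injF {X Y : C} {h₁ h₂ : X ⟶ T.obj Y}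
    (e : T.map h₁ ≫ T.μ.app Y = T.map h₂ ≫ T.μ.app Y) : h₁ = h₂ := by
  rw [← recover h₁, ← recover h₂, e]

theorem aux' (hF : IsFrobeniusMonad T) (Y : C) :
    T.map ((T.μ.app Y)†) ≫ T.μ.app (T.obj Y) ≫ T.map ((T.η.app Y)†) = T.μ.app Y := by
  rw [← T.μ.naturality ((T.η.app Y)†)]
  show T.map ((T.μ.app Y)†) ≫ T.map (T.map ((T.η.app Y)†)) ≫ T.μ.app Y = T.μ.app Y
  rw [← Functor.map_comp_assoc, lem1 hF, CategoryTheory.Functor.map_id, Category.id_comp]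

theorem auxd (hF : IsFrobeniusMonad T) (Y : C) :
    T.map (T.η.app Y) ≫ ((T.μ.app (T.obj Y))†) ≫ T.map (T.μ.app Y) = ((T.μ.app Y)†) := by
  have h := congrArg DaggerStruct.dag (aux' hF Y)
  simp only [DaggerStruct.dag_comp, ← hF.map_dag, DaggerStruct.dag_dag, Category.assoc] at h
  exact h

theorem key (hF : IsFrobeniusMonad T) {X Y : C} (g : X ⟶ T.obj Y) :
    T.map (kd T g) ≫ T.μ.app X = ((T.map g ≫ T.μ.app Y)†) := by
  rw [DaggerStruct.dag_comp, mapdag' hF]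
  unfold kd
  rw [Functor.map_comp, Functor.map_comp, Category.assoc, Category.assoc]
  erw [T.μ.naturality (g†)]
  rw [← reassoc_of% (hF.frobenius Y), reassoc_of% (auxd hF Y)]

theorem kdmu (hF : IsFrobeniusMonad T) (A : C) :
    kd T ((T.μ.app A)†) = ((T.μ.app A)†) := by
  unfold kd
  rw [DaggerStruct.dag_dag, hF.frobenius A]
  exact recover _

end Aux

/-- STATEMENT 11: a monad `T` on a dagger category `C` is a Frobenius monad iff the
Kleisli category `C_T` admits a dagger such that (i) the canonical functors `C → C_T`
and `C_T → C` are dagger functors, and (ii) each `μ_A† : T(A) ⟶ T(A)` (as a Kleisli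
morphism) is self-adjoint with respect to that dagger. -/
theorem frobenius_iff_kleisli_dagger {C : Type u} [Category.{v} C] [DaggerStruct C]
    (T : Monad C) :
    IsFrobeniusMonad T ↔
      ∃ ds : DaggerStruct (Kleisli T),
        (∀ {X Y : C} (f : X ⟶ Y),
          ds.dag ((Kleisli.Adjunction.toKleisli T).map f) =
            (Kleisli.Adjunction.toKleisli T).map (f†)) ∧
        (∀ {X Y : Kleisli T} (g : X ⟶ Y),
          (Kleisli.Adjunction.fromKleisli T).map (ds.dag g) =
            (((Kleisli.Adjunction.fromKleisli T).map g)†)) ∧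
        (∀ A : C, ds.dag (kHom T ((T.μ.app A)†)) = kHom T ((T.μ.app A)†)) := by
  constructor
  · intro hF
    have keyF : ∀ {X Y : Kleisli T} (g : X ⟶ Y),
        (Kleisli.Adjunction.fromKleisli T).map (Kleisli.Hom.mk (kd T g.of) : Y ⟶ X) =
          (((Kleisli.Adjunction.fromKleisli T).map g)†) := by
      intro X Y g
      simpa [Kleisli.Adjunction.fromKleisli] using key hF g.of
    have injK : ∀ {X Y : Kleisli T} {h₁ h₂ : X ⟶ Y},
        (Kleisli.Adjunction.fromKleisli T).map h₁ =
          (Kleisli.Adjunction.fromKleisli T).map h₂ → h₁ = h₂ := by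
      intro X Y h₁ h₂ e
      exact Kleisli.hom_ext (injF (by simpa [Kleisli.Adjunction.fromKleisli] using e))
    refine ⟨⟨fun {X Y} g => Kleisli.Hom.mk (kd T g.of), ?_, ?_, ?_⟩, ?_, ?_, ?_⟩
    · intro X Y f
      apply injK
      rw [keyF, keyF, DaggerStruct.dag_dag]
    · intro X
      apply injK
      rw [keyF]
      simp only [CategoryTheory.Functor.map_id, DaggerStruct.dag_id]
    · intro X Y Z f g
      apply injK
      simp only [keyF, CategoryTheory.Functor.map_comp, DaggerStruct.dag_comp]
    · intro X Y f
      apply injK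
      show (Kleisli.Adjunction.fromKleisli T).map
          (Kleisli.Hom.mk (kd T ((Kleisli.Adjunction.toKleisli T).map f).of)) = _
      rw [keyF]
      simp [Kleisli.Adjunction.fromKleisli, Kleisli.Adjunction.toKleisli,
        hF.map_dag, DaggerStruct.dag_comp, DaggerStruct.dag_dag]
    · intro X Y g
      exact keyF g
    · intro A
      exact congrArg (Kleisli.Hom.mk (T := T)) (kdmu hF A)
  · rintro ⟨ds, h1, h2, h3⟩
    have mapd : ∀ {X Y : C} (f : X ⟶ Y), T.map (f†) = ((T.map f)†) := by
      intro X Y f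
      have e := h2 ((Kleisli.Adjunction.toKleisli T).map f)
      rw [h1 f] at e
      simpa [Kleisli.Adjunction.fromKleisli, Kleisli.Adjunction.toKleisli] using e
    refine ⟨mapd, ?_⟩
    intro A
    have e := h2 (kHom T ((T.μ.app A)†))
    rw [h3 A] at e
    simp only [Kleisli.Adjunction.fromKleisli_map, kHom, kObj] at e
    have e2 : ((T.map ((T.μ.app A)†) ≫ T.μ.app (T.obj A))†) =
        ((T.μ.app (T.obj A))†) ≫ T.map (T.μ.app A) := by
      rw [DaggerStruct.dag_comp, ← mapd, DaggerStruct.dag_dag]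
    rw [← e2]
    exact e.symm
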